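/- Let u₁, …, u_m be independent, identically distributed real random variables with mean zero whose values lie almost surely in an interval of length L > 0, and let S_k = Σ_{i=1}^{k} u_i for k ∈ {1,…,m}. If λ > 0 satisfies exp(−2λ²/(m·L²)) ≤ 1/4, then P( max_{k ∈ {1,…,m}} |S_k| > 2λ ) ≤ 4·exp(−2λ²/(m·L²)). -/

import Mathlib

open MeasureTheory ProbabilityTheory Real
open scoped ENNReal

set_option maxHeartbeats 1000000 in
lemma hoeff_core {p : ℝ} (hp0 : 0 ≤ p) (hp1 : p ≤ 1) (h : ℝ) :
    1 - p + p * Real.exp h ≤ Real.exp (p * h + h ^ 2 / 8) := by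
  have hD : ∀ x : ℝ, 0 < 1 - p + p * Real.exp x := by
    intro x
    rcases eq_or_lt_of_le hp0 with hp | hp
    · simp [← hp]
    · nlinarith [Real.exp_pos x, mul_pos hp (Real.exp_pos x)]
  set f : ℝ → ℝ := fun x => p * x + x ^ 2 / 8 - Real.log (1 - p + p * Real.exp x) with hf
  set f' : ℝ → ℝ := fun x => p + x / 4 - p * Real.exp x / (1 - p + p * Real.exp x) with hf'
  have hDer : ∀ x, HasDerivAt f (f' x) x := by
    intro x
    have hDd : HasDerivAt (fun y => 1 - p + p * Real.exp y) (p * Real.exp x) x :=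
      ((Real.hasDerivAt_exp x).const_mul p).const_add (1 - p)
    have hlog : HasDerivAt (fun y => Real.log (1 - p + p * Real.exp y))
        ((1 - p + p * Real.exp x)⁻¹ * (p * Real.exp x)) x :=
      by have := (Real.hasDerivAt_log (hD x).ne').comp x hDd; exact this
    have hpoly : HasDerivAt (fun y => p * y + y ^ 2 / 8) (p + 2 * x ^ 1 / 8) x := by
      have := ((hasDerivAt_id x).const_mul p).add ((hasDerivAt_pow 2 x).div_const 8)
      exact this.congr_deriv (by push_cast; ring)
    have := hpoly.sub hlog
    exact this.congr_deriv (by simp only [hf']; field_simp; ring)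
  have hDer' : ∀ x, HasDerivAt f'
      (1 / 4 - (p * Real.exp x * (1 - p + p * Real.exp x) - (p * Real.exp x) ^ 2)
        / (1 - p + p * Real.exp x) ^ 2) x := by
    intro x
    have hNd : HasDerivAt (fun y => p * Real.exp y) (p * Real.exp x) x :=
      (Real.hasDerivAt_exp x).const_mul p
    have hDd : HasDerivAt (fun y => 1 - p + p * Real.exp y) (p * Real.exp x) x :=
      ((Real.hasDerivAt_exp x).const_mul p).const_add (1 - p)
    have hq : HasDerivAt (fun y => p * Real.exp y / (1 - p + p * Real.exp y))
        ((p * Real.exp x * (1 - p + p * Real.exp x) - p * Real.exp x * (p * Real.exp x))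
          / (1 - p + p * Real.exp x) ^ 2) x := hNd.div hDd (hD x).ne'
    have hlin : HasDerivAt (fun y : ℝ => p + y / 4) (1 / 4) x := by
      simpa using (hasDerivAt_id x).div_const 4 |>.const_add p
    have := hlin.sub hq
    exact this.congr_deriv (by ring)
  have hmono : Monotone f' := by
    refine monotone_of_deriv_nonneg (fun x => (hDer' x).differentiableAt) ?_
    intro x
    rw [(hDer' x).deriv]
    have hd := hD x
    set q := p * Real.exp x
    set d := 1 - p + p * Real.exp x
    have : (0:ℝ) ≤ (d / 2 - q) ^ 2 := sq_nonneg _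
    have hd2 : (0:ℝ) < d ^ 2 := by positivity
    rw [sub_nonneg, div_le_iff₀ hd2]
    nlinarith
  have hf'0 : f' 0 = 0 := by simp [hf']
  have hf0 : f 0 = 0 := by simp [hf]
  have key : 0 ≤ f h := by
    rcases le_total 0 h with hh | hh
    · have hmf : MonotoneOn f (Set.Ici (0:ℝ)) := by
        refine monotoneOn_of_deriv_nonneg (convex_Ici 0)
          ?_ (fun x _ => (hDer x).differentiableAt.differentiableWithinAt) ?_
        · intro x _
          exact (hDer x).continuousAt.continuousWithinAt
        · intro x hx
          rw [(hDer x).deriv]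
          rw [interior_Ici] at hx
          have := hmono (le_of_lt hx)
          rw [hf'0] at this
          linarith
      have := hmf Set.self_mem_Ici hh hh
      rwa [hf0] at this
    · have hmf : AntitoneOn f (Set.Iic (0:ℝ)) := by
        refine antitoneOn_of_deriv_nonpos (convex_Iic 0)
          ?_ (fun x _ => (hDer x).differentiableAt.differentiableWithinAt) ?_
        · intro x _
          exact (hDer x).continuousAt.continuousWithinAt
        · intro x hx
          rw [(hDer x).deriv]
          rw [interior_Iic] at hx
          have := hmono (le_of_lt hx)
          rw [hf'0] at this
          linarith
      have := hmf hh Set.self_mem_Iic hh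
      rwa [hf0] at this
  have hlog : Real.log (1 - p + p * Real.exp h) ≤ p * h + h ^ 2 / 8 := by
    simp only [hf] at key; linarith
  calc 1 - p + p * Real.exp h = Real.exp (Real.log (1 - p + p * Real.exp h)) :=
        (Real.exp_log (hD h)).symm
    _ ≤ _ := Real.exp_le_exp.mpr hlog

set_option maxHeartbeats 1000000 in
lemma hoeff_mgf {Θ : Type*} [MeasurableSpace Θ] (Pr : Measure Θ) [IsProbabilityMeasure Pr]
    (X : Θ → ℝ) (hX : Measurable X) (a b : ℝ) (hab : a < b)
    (hbd : ∀ᵐ θ ∂Pr, X θ ∈ Set.Icc a b) (hmean : ∫ θ, X θ ∂Pr = 0) (t : ℝ) :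
    mgf X Pr t ≤ Real.exp (t ^ 2 * (b - a) ^ 2 / 8) := by
  have hba : 0 < b - a := by linarith
  have hXint : Integrable X Pr := by
    refine Integrable.mono' (integrable_const (max |a| |b|)) hX.aestronglyMeasurable ?_
    filter_upwards [hbd] with θ hθ
    exact abs_le_max_abs_abs hθ.1 hθ.2
  have ha0 : a ≤ 0 := by
    have : ∫ θ, (a : ℝ) ∂Pr ≤ ∫ θ, X θ ∂Pr := by
      refine integral_mono_ae (integrable_const a) hXint ?_
      filter_upwards [hbd] with θ hθ using hθ.1
    simpa [hmean] using this
  have hb0 : 0 ≤ b := by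
    have : ∫ θ, X θ ∂Pr ≤ ∫ θ, (b : ℝ) ∂Pr := by
      refine integral_mono_ae hXint (integrable_const b) ?_
      filter_upwards [hbd] with θ hθ using hθ.2
    simpa [hmean] using this
  set p : ℝ := -a / (b - a) with hp
  have hp0 : 0 ≤ p := div_nonneg (by linarith) hba.le
  have hp1 : p ≤ 1 := by rw [hp, div_le_one hba]; linarith
  -- pointwise convexity bound
  have hptw : ∀ x ∈ Set.Icc a b, Real.exp (t * x)
      ≤ (b - x) / (b - a) * Real.exp (t * a) + (x - a) / (b - a) * Real.exp (t * b) := by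
    intro x hx
    have hc1 : 0 ≤ (b - x) / (b - a) := by
      apply div_nonneg _ hba.le; linarith [hx.2]
    have hc2 : 0 ≤ (x - a) / (b - a) := by
      apply div_nonneg _ hba.le; linarith [hx.1]
    have hsum : (b - x) / (b - a) + (x - a) / (b - a) = 1 := by field_simp; ring
    have := convexOn_exp.2 (Set.mem_univ (t * a)) (Set.mem_univ (t * b)) hc1 hc2 hsum
    have harg : (b - x) / (b - a) * (t * a) + (x - a) / (b - a) * (t * b) = t * x := by
      field_simp
      ring
    rw [smul_eq_mul, smul_eq_mul, smul_eq_mul, smul_eq_mul, harg] at this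
    exact this
  -- integrability of exp(t X)
  have hexp_int : Integrable (fun θ => Real.exp (t * X θ)) Pr := by
    refine Integrable.mono' (integrable_const (Real.exp (|t| * max |a| |b|)))
      ((hX.const_mul t).exp).aestronglyMeasurable ?_
    filter_upwards [hbd] with θ hθ
    rw [Real.norm_eq_abs, abs_of_nonneg (Real.exp_pos _).le, Real.exp_le_exp]
    calc t * X θ ≤ |t * X θ| := le_abs_self _
      _ = |t| * |X θ| := abs_mul _ _
      _ ≤ |t| * max |a| |b| := by
          exact mul_le_mul_of_nonneg_left (abs_le_max_abs_abs hθ.1 hθ.2) (abs_nonneg t)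
  set E1 := Real.exp (t * a)
  set E2 := Real.exp (t * b)
  have hrw : ∀ θ, (b - X θ) / (b - a) * E1 + (X θ - a) / (b - a) * E2
      = (E2 - E1) / (b - a) * X θ + (b * E1 - a * E2) / (b - a) := by
    intro θ
    field_simp
    ring
  have hmgf : mgf X Pr t ≤ (1 - p) * E1 + p * E2 := by
    rw [mgf]
    have hint2 : Integrable (fun θ =>
        (E2 - E1) / (b - a) * X θ + (b * E1 - a * E2) / (b - a)) Pr :=
      (hXint.const_mul _).add (integrable_const _)
    have hmono := integral_mono_ae hexp_int hint2 ?_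
    · refine hmono.trans_eq ?_
      rw [integral_add (hXint.const_mul _) (integrable_const _), integral_const_mul, hmean,
        integral_const]
      simp only [measure_univ, probReal_univ, one_smul, mul_zero, zero_add]
      rw [hp]
      field_simp
      ring
    · filter_upwards [hbd] with θ hθ
      rw [← hrw θ]
      exact hptw _ hθ
  refine hmgf.trans ?_
  have key : (1 - p) * Real.exp (t * a) + p * Real.exp (t * b)
      = Real.exp (t * a) * (1 - p + p * Real.exp (t * (b - a))) := by
    have he : Real.exp (t * b) = Real.exp (t * a) * Real.exp (t * (b - a)) := by
      rw [← Real.exp_add]; congr 1; ring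
    rw [he]; ring
  rw [key]
  have := hoeff_core hp0 hp1 (t * (b - a))
  calc Real.exp (t * a) * (1 - p + p * Real.exp (t * (b - a)))
      ≤ Real.exp (t * a) * Real.exp (p * (t * (b - a)) + (t * (b - a)) ^ 2 / 8) := by
        exact mul_le_mul_of_nonneg_left this (Real.exp_pos _).le
    _ = Real.exp (t * a + p * (t * (b - a)) + (t * (b - a)) ^ 2 / 8) := by
        rw [← Real.exp_add]; congr 1; ring
    _ = Real.exp (t ^ 2 * (b - a) ^ 2 / 8) := by
        congr 1
        have h0 : t * a + p * (t * (b - a)) = 0 := by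
          rw [hp]; field_simp; ring
        linear_combination h0

set_option maxHeartbeats 1000000 in
lemma tail_bound {Θ : Type*} [MeasurableSpace Θ] (Pr : Measure Θ) [IsProbabilityMeasure Pr]
    (m : ℕ) (hm : 1 ≤ m) (u : ℕ → Θ → ℝ) (hmeas : ∀ i, Measurable (u i))
    (hInd : iIndepFun
      (fun k : {k : ℕ // 1 ≤ k ∧ k ≤ m} => u k.1) Pr)
    (hmean : ∀ i ∈ Finset.Icc 1 m, (∫ θ, u i θ ∂Pr) = 0)
    (L : ℝ) (hL : 0 < L) (a : ℝ)
    (hbound : ∀ i ∈ Finset.Icc 1 m, ∀ᵐ θ ∂Pr, u i θ ∈ Set.Icc a (a + L))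
    (J : Finset ℕ) (hJ : J ⊆ Finset.Icc 1 m) (hJne : J.Nonempty)
    (l : ℝ) (hl : 0 < l) :
    Pr {θ | l < |∑ i ∈ J, u i θ|}
      ≤ ENNReal.ofReal (2 * Real.exp (-2 * l ^ 2 / (m * L ^ 2))) := by
  classical
  set ι := {k : ℕ // 1 ≤ k ∧ k ≤ m}
  have hmeas' : ∀ i : ι, Measurable ((fun k : ι => u k.1) i) := fun i => hmeas i.1
  set J' : Finset ι := J.subtype (fun k => 1 ≤ k ∧ k ≤ m) with hJ'def
  have hfilter : J.filter (fun k => 1 ≤ k ∧ k ≤ m) = J :=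
    Finset.filter_true_of_mem (fun i hi => Finset.mem_Icc.mp (hJ hi))
  have hsum_eq : ∀ θ, ∑ i ∈ J', u i.1 θ = ∑ i ∈ J, u i θ := by
    intro θ
    rw [hJ'def]
    exact Finset.sum_subtype_of_mem (fun n => u n θ) (fun x hx => Finset.mem_Icc.mp (hJ hx))
  have hcard : J'.card = J.card := by
    rw [hJ'def, Finset.card_subtype, hfilter]
  set T : Θ → ℝ := fun θ => ∑ i ∈ J, u i θ with hT
  have hTmeas : Measurable T := Finset.measurable_sum _ (fun i _ => hmeas i)
  set ν : ℝ := (J.card : ℝ) with hν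
  have hν1 : 1 ≤ ν := by
    rw [hν]
    exact_mod_cast Nat.one_le_iff_ne_zero.mpr (Finset.card_ne_zero_of_mem hJne.choose_spec)
  have hν0 : 0 < ν := lt_of_lt_of_le one_pos hν1
  have hνm : ν ≤ (m : ℝ) := by
    rw [hν]
    exact_mod_cast (Finset.card_le_card hJ).trans_eq (by simp [Nat.card_Icc])
  -- integrability of exp (t * T)
  have hbd_ae : ∀ᵐ θ ∂Pr, ∀ i ∈ J, u i θ ∈ Set.Icc a (a + L) :=
    (ae_ball_iff J.countable_toSet).2 (fun i hi => hbound i (hJ hi))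
  have hTbd : ∀ᵐ θ ∂Pr, |T θ| ≤ ν * max |a| |a + L| := by
    filter_upwards [hbd_ae] with θ hθ
    calc |T θ| ≤ ∑ i ∈ J, |u i θ| := Finset.abs_sum_le_sum_abs _ _
      _ ≤ J.card • max |a| |a + L| := by
          refine Finset.sum_le_card_nsmul _ _ _ (fun i hi => ?_)
          exact abs_le_max_abs_abs (hθ i hi).1 (hθ i hi).2
      _ = ν * max |a| |a + L| := by rw [nsmul_eq_mul, hν]
  have hint : ∀ t : ℝ, Integrable (fun θ => Real.exp (t * T θ)) Pr := by
    intro t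
    refine Integrable.mono' (integrable_const (Real.exp (|t| * (ν * max |a| |a + L|))))
      ((hTmeas.const_mul t).exp).aestronglyMeasurable ?_
    filter_upwards [hTbd] with θ hθ
    rw [Real.norm_eq_abs, abs_of_nonneg (Real.exp_pos _).le, Real.exp_le_exp]
    calc t * T θ ≤ |t * T θ| := le_abs_self _
      _ = |t| * |T θ| := abs_mul _ _
      _ ≤ |t| * (ν * max |a| |a + L|) :=
          mul_le_mul_of_nonneg_left hθ (abs_nonneg t)
  -- mgf bound
  have hmgf_le : ∀ t : ℝ, mgf T Pr t ≤ Real.exp (ν * (t ^ 2 * L ^ 2 / 8)) := by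
    intro t
    have hTfun : T = ∑ i ∈ J', (fun k : ι => u k.1) i := by
      funext θ
      rw [hT]
      simp only [Finset.sum_apply]
      exact (hsum_eq θ).symm
    rw [hTfun, hInd.mgf_sum hmeas' J']
    have hone : ∀ i : ι, i ∈ J' → mgf (u i.1) Pr t ≤ Real.exp (t ^ 2 * L ^ 2 / 8) := by
      intro i _
      have hiIcc : i.1 ∈ Finset.Icc 1 m := Finset.mem_Icc.mpr i.2
      have := hoeff_mgf Pr (u i.1) (hmeas i.1) a (a + L) (by linarith)
        (hbound i.1 hiIcc) (hmean i.1 hiIcc) t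
      simpa using this
    calc ∏ i ∈ J', mgf (u i.1) Pr t ≤ ∏ _i ∈ J', Real.exp (t ^ 2 * L ^ 2 / 8) :=
          Finset.prod_le_prod (fun i _ => mgf_nonneg) hone
      _ = Real.exp (t ^ 2 * L ^ 2 / 8) ^ J'.card := Finset.prod_const _
      _ = Real.exp (ν * (t ^ 2 * L ^ 2 / 8)) := by
          rw [← Real.exp_nat_mul, hcard, hν]
  set t0 : ℝ := 4 * l / (ν * L ^ 2) with ht0
  have ht0pos : 0 < t0 := by positivity
  have hexparg : -t0 * l + ν * (t0 ^ 2 * L ^ 2 / 8) = -2 * l ^ 2 / (ν * L ^ 2) := by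
    rw [ht0]
    field_simp
    ring
  have hEν : Real.exp (-2 * l ^ 2 / (ν * L ^ 2)) ≤ Real.exp (-2 * l ^ 2 / (m * L ^ 2)) := by
    rw [Real.exp_le_exp, neg_mul, neg_div, neg_div, neg_le_neg_iff]
    apply div_le_div_of_nonneg_left (by positivity) (by positivity)
    have hm0 : (0:ℝ) < m := lt_of_lt_of_le hν0 hνm
    nlinarith
  -- upper tail
  have hup : (Pr {θ | l ≤ T θ}).toReal ≤ Real.exp (-2 * l ^ 2 / (m * L ^ 2)) := by
    calc (Pr {θ | l ≤ T θ}).toReal ≤ Real.exp (-t0 * l) * mgf T Pr t0 :=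
          measure_ge_le_exp_mul_mgf l ht0pos.le (hint t0)
      _ ≤ Real.exp (-t0 * l) * Real.exp (ν * (t0 ^ 2 * L ^ 2 / 8)) :=
          mul_le_mul_of_nonneg_left (hmgf_le t0) (Real.exp_pos _).le
      _ = Real.exp (-2 * l ^ 2 / (ν * L ^ 2)) := by rw [← Real.exp_add, hexparg]
      _ ≤ _ := hEν
  -- lower tail
  have hlow : (Pr {θ | T θ ≤ -l}).toReal ≤ Real.exp (-2 * l ^ 2 / (m * L ^ 2)) := by
    calc (Pr {θ | T θ ≤ -l}).toReal ≤ Real.exp (-(-t0) * (-l)) * mgf T Pr (-t0) :=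
          measure_le_le_exp_mul_mgf (-l) (by linarith) (hint (-t0))
      _ ≤ Real.exp (-t0 * l) * Real.exp (ν * (t0 ^ 2 * L ^ 2 / 8)) := by
          rw [show -(-t0) * (-l) = -t0 * l by ring]
          refine mul_le_mul_of_nonneg_left ?_ (Real.exp_pos _).le
          have := hmgf_le (-t0)
          rwa [neg_sq] at this
      _ = Real.exp (-2 * l ^ 2 / (ν * L ^ 2)) := by rw [← Real.exp_add, hexparg]
      _ ≤ _ := hEν
  -- combine
  have hsubset : {θ | l < |T θ|} ⊆ {θ | l ≤ T θ} ∪ {θ | T θ ≤ -l} := by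
    intro θ hθ
    simp only [Set.mem_setOf_eq] at hθ
    simp only [Set.mem_union, Set.mem_setOf_eq]
    rcases lt_abs.mp hθ with h | h
    · exact Or.inl h.le
    · exact Or.inr (by linarith)
  have toEnn : ∀ (s : Set Θ) (r : ℝ), (Pr s).toReal ≤ r → Pr s ≤ ENNReal.ofReal r := by
    intro s r h
    rw [← ENNReal.ofReal_toReal (measure_ne_top Pr s)]
    exact ENNReal.ofReal_le_ofReal h
  calc Pr {θ | l < |T θ|} ≤ Pr ({θ | l ≤ T θ} ∪ {θ | T θ ≤ -l}) := measure_mono hsubset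
    _ ≤ Pr {θ | l ≤ T θ} + Pr {θ | T θ ≤ -l} := measure_union_le _ _
    _ ≤ ENNReal.ofReal (Real.exp (-2 * l ^ 2 / (m * L ^ 2)))
        + ENNReal.ofReal (Real.exp (-2 * l ^ 2 / (m * L ^ 2))) :=
        add_le_add (toEnn _ _ hup) (toEnn _ _ hlow)
    _ = ENNReal.ofReal (2 * Real.exp (-2 * l ^ 2 / (m * L ^ 2))) := by
        rw [← ENNReal.ofReal_add (Real.exp_pos _).le (Real.exp_pos _).le, two_mul]

set_option maxHeartbeats 1000000 in
/-- Maximal inequality for i.i.d. mean-zero random variables `u₁, …, u_m` taking values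
a.s. in an interval of length `L`, with partial sums `S_k = Σ_{i=1}^k u_i`: if `λ > 0`
satisfies `exp(-2λ²/(m·L²)) ≤ 1/4`, then
`P(max_{k ≤ m} |S_k| > 2λ) ≤ 4·exp(-2λ²/(m·L²))`. -/
theorem stmt8 {Θ : Type*} [MeasurableSpace Θ] (Pr : Measure Θ) [IsProbabilityMeasure Pr]
    (m : ℕ) (hm : 1 ≤ m) (u : ℕ → Θ → ℝ) (hmeas : ∀ i, Measurable (u i))
    (hInd : iIndepFun
      (fun k : {k : ℕ // 1 ≤ k ∧ k ≤ m} => u k.1) Pr)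
    (hid : ∀ i ∈ Finset.Icc 1 m, ∀ j ∈ Finset.Icc 1 m, IdentDistrib (u i) (u j) Pr Pr)
    (hmean : ∀ i ∈ Finset.Icc 1 m, (∫ θ, u i θ ∂Pr) = 0)
    (L : ℝ) (hL : 0 < L) (a : ℝ)
    (hbound : ∀ i ∈ Finset.Icc 1 m, ∀ᵐ θ ∂Pr, u i θ ∈ Set.Icc a (a + L))
    (S : ℕ → Θ → ℝ) (hS : ∀ k θ, S k θ = ∑ i ∈ Finset.Icc 1 k, u i θ) :
    ∀ l : ℝ, 0 < l → Real.exp (-2 * l ^ 2 / (m * L ^ 2)) ≤ 1 / 4 →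
      Pr {θ | ∃ k ∈ Finset.Icc 1 m, 2 * l < |S k θ|}
        ≤ ENNReal.ofReal (4 * Real.exp (-2 * l ^ 2 / (m * L ^ 2))) := by
  classical
  intro l hl hE
  set E : ℝ := Real.exp (-2 * l ^ 2 / (m * L ^ 2)) with hEdef
  have hE0 : 0 < E := Real.exp_pos _
  set ι := {k : ℕ // 1 ≤ k ∧ k ≤ m} with hι
  -- sigma algebras
  set MS : ℕ → MeasurableSpace Θ :=
    fun k => ⨆ i ∈ {i : ι | i.1 ≤ k}, MeasurableSpace.comap (u i.1) inferInstance with hMS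
  set MT : ℕ → MeasurableSpace Θ :=
    fun k => ⨆ i ∈ {i : ι | k < i.1}, MeasurableSpace.comap (u i.1) inferInstance with hMT
  have hcomap_le : ∀ i : ι, MeasurableSpace.comap (u i.1) inferInstance ≤ _ :=
    fun i => (hmeas i.1).comap_le
  have hiI := hInd.iIndep
  have hIndep : ∀ k, Indep (MS k) (MT k) Pr := by
    intro k
    refine indep_iSup_of_disjoint hcomap_le hiI ?_
    rw [Set.disjoint_left]
    intro i hi hi'
    simp only [Set.mem_setOf_eq] at hi hi'
    omega
  have hMS_le : ∀ k, MS k ≤ (inferInstance : MeasurableSpace Θ) :=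
    fun k => iSup₂_le fun i _ => hcomap_le i
  have hMT_le : ∀ k, MT k ≤ (inferInstance : MeasurableSpace Θ) :=
    fun k => iSup₂_le fun i _ => hcomap_le i
  -- measurability of partial sums wrt MS
  have hu_MS : ∀ k n, 1 ≤ n → n ≤ k → k ≤ m → Measurable[MS k] (u n) := by
    intro k n h1 h2 h3
    refine Measurable.of_comap_le ?_
    have : (⟨n, h1, h2.trans h3⟩ : ι) ∈ {i : ι | i.1 ≤ k} := h2
    exact le_trans (le_of_eq rfl) (le_biSup (fun i : ι => MeasurableSpace.comap (u i.1) inferInstance) this)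
  have hS_MS : ∀ k j, j ≤ k → k ≤ m → Measurable[MS k] (S j) := by
    intro k j hjk hkm
    have : S j = fun θ => ∑ n ∈ Finset.Icc 1 j, u n θ := funext (hS j)
    rw [this]
    refine Finset.measurable_sum _ (fun n hn => ?_)
    rw [Finset.mem_Icc] at hn
    exact hu_MS k n hn.1 (hn.2.trans hjk) hkm
  -- the Y functions and B events
  set Y : ℕ → Θ → ℝ := fun k θ => ∑ n ∈ Finset.Icc (k + 1) m, u n θ with hY
  have hY_MT : ∀ k, Measurable[MT k] (Y k) := by
    intro k
    refine Finset.measurable_sum _ (fun n hn => ?_)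
    rw [Finset.mem_Icc] at hn
    refine Measurable.of_comap_le ?_
    have : (⟨n, by omega, hn.2⟩ : ι) ∈ {i : ι | k < i.1} := by
      show k < n; omega
    exact le_biSup (fun i : ι => MeasurableSpace.comap (u i.1) inferInstance) this
  set B : ℕ → Set Θ := fun k => {θ | |Y k θ| ≤ l} with hB
  have hB_MT : ∀ k, MeasurableSet[MT k] (B k) := by
    intro k
    exact (measurable_abs.comp (hY_MT k)) measurableSet_Iic
  -- the A events
  set A : ℕ → Set Θ :=
    fun k => (⋂ j ∈ Finset.Icc 1 (k - 1), {θ | |S j θ| ≤ 2 * l}) ∩ {θ | 2 * l < |S k θ|} with hA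
  have hA_MS : ∀ k ∈ Finset.Icc 1 m, MeasurableSet[MS k] (A k) := by
    intro k hk
    rw [Finset.mem_Icc] at hk
    refine MeasurableSet.inter ?_ ?_
    · refine MeasurableSet.iInter (fun j => MeasurableSet.iInter (fun hj => ?_))
      rw [Finset.mem_Icc] at hj
      exact (measurable_abs.comp (hS_MS k j (by omega) hk.2)) measurableSet_Iic
    · exact (measurable_abs.comp (hS_MS k k le_rfl hk.2)) measurableSet_Ioi
  have hA_meas : ∀ k ∈ Finset.Icc 1 m, MeasurableSet (A k) :=
    fun k hk => hMS_le k _ (hA_MS k hk)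
  have hB_meas : ∀ k, MeasurableSet (B k) := fun k => hMT_le k _ (hB_MT k)
  -- splitting of S m
  have hsplit : ∀ k ∈ Finset.Icc 1 m, ∀ θ, S m θ = S k θ + Y k θ := by
    intro k hk θ
    rw [Finset.mem_Icc] at hk
    rw [hS, hS, hY]
    have hdisjI : Disjoint (Finset.Icc 1 k) (Finset.Icc (k + 1) m) := by
      rw [Finset.disjoint_left]
      intro n hn hn'
      rw [Finset.mem_Icc] at hn hn'
      omega
    have hunion : Finset.Icc 1 k ∪ Finset.Icc (k + 1) m = Finset.Icc 1 m := by
      ext n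
      simp only [Finset.mem_union, Finset.mem_Icc]
      omega
    rw [← Finset.sum_union hdisjI, hunion]
  -- target set equality
  set C : Set Θ := {θ | l < |S m θ|} with hC
  have hTeq : {θ | ∃ k ∈ Finset.Icc 1 m, 2 * l < |S k θ|} = ⋃ k ∈ Finset.Icc 1 m, A k := by
    ext θ
    simp only [Set.mem_setOf_eq, Set.mem_iUnion]
    constructor
    · rintro ⟨k, hk, hgt⟩
      have hQ : ∃ n, n ∈ Finset.Icc 1 m ∧ 2 * l < |S n θ| := ⟨k, hk, hgt⟩
      refine ⟨Nat.find hQ, (Nat.find_spec hQ).1, ?_, (Nat.find_spec hQ).2⟩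
      simp only [Set.mem_iInter, Set.mem_setOf_eq]
      intro j hj
      rw [Finset.mem_Icc] at hj
      have hspec := Nat.find_spec hQ
      have hk0m := Finset.mem_Icc.mp hspec.1
      have hjlt : j < Nat.find hQ := by omega
      have := Nat.find_min hQ hjlt
      push_neg at this
      exact this (Finset.mem_Icc.mpr (by omega))
    · rintro ⟨k, hk, _, hgt⟩
      exact ⟨k, hk, hgt⟩
  -- disjointness
  have hdisj_lt : ∀ p q, p ∈ Finset.Icc 1 m → q ∈ Finset.Icc 1 m → p < q →
      Disjoint (A p) (A q) := by
    intro p q hp hq hpq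
    rw [Set.disjoint_left]
    intro θ hθp hθq
    rw [Finset.mem_Icc] at hp
    have h1 := hθp.2
    have h2 := hθq.1
    simp only [Set.mem_iInter, Set.mem_setOf_eq] at h1 h2
    have := h2 p (by rw [Finset.mem_Icc]; omega)
    linarith
  have hdisj : (↑(Finset.Icc 1 m) : Set ℕ).PairwiseDisjoint A := by
    intro p hp q hq hne
    rw [Finset.mem_coe] at hp hq
    rcases hne.lt_or_gt with h | h
    · exact hdisj_lt p q hp hq h
    · exact (hdisj_lt q p hq hp h).symm
  -- A ∩ B ⊆ C
  have hABC : ∀ k ∈ Finset.Icc 1 m, A k ∩ B k ⊆ C := by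
    intro k hk θ hθ
    have h1 : 2 * l < |S k θ| := hθ.1.2
    have h2 : |Y k θ| ≤ l := hθ.2
    have h3 := hsplit k hk θ
    simp only [hC, Set.mem_setOf_eq]
    have h4 : |S k θ| ≤ |S m θ| + |Y k θ| := by
      calc |S k θ| = |S m θ + -(Y k θ)| := by rw [h3]; ring_nf
        _ ≤ |S m θ| + |-(Y k θ)| := abs_add_le _ _
        _ = |S m θ| + |Y k θ| := by rw [abs_neg]
    linarith
  -- Pr (B k) ≥ 1/2
  have h2E : ENNReal.ofReal (2 * E) ≤ 1 / 2 := by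
    have : ENNReal.ofReal (1/2 : ℝ) = 1/2 := by
      rw [ENNReal.ofReal_div_of_pos (by norm_num)]; norm_num
    rw [← this]
    exact ENNReal.ofReal_le_ofReal (by linarith)
  have hPrB : ∀ k ∈ Finset.Icc 1 m, (1 : ℝ≥0∞) / 2 ≤ Pr (B k) := by
    intro k hk
    rw [Finset.mem_Icc] at hk
    rcases eq_or_lt_of_le hk.2 with hkm | hkm
    · have : B k = Set.univ := by
        ext θ
        simp only [hB, Set.mem_setOf_eq, Set.mem_univ, iff_true, hY]
        rw [hkm]
        rw [Finset.Icc_eq_empty (by omega)]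
        simp [hl.le]
      rw [this, measure_univ]
      exact ENNReal.half_le_self.trans le_rfl
    · have hcompl : (B k)ᶜ = {θ | l < |Y k θ|} := by
        ext θ
        simp [hB, not_le]
      have htail : Pr ((B k)ᶜ) ≤ ENNReal.ofReal (2 * E) := by
        rw [hcompl]
        exact tail_bound Pr m hm u hmeas hInd hmean L hL a hbound
          (Finset.Icc (k + 1) m)
          (fun n hn => by rw [Finset.mem_Icc] at *; omega)
          (Finset.nonempty_Icc.mpr (by omega)) l hl
      have hhalf : Pr ((B k)ᶜ) ≤ 1 / 2 := htail.trans h2E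
      have := prob_compl_eq_one_sub (μ := Pr) (hB_meas k)
      have hBk : Pr (B k) = 1 - Pr ((B k)ᶜ) := by
        rw [this]
        rw [ENNReal.sub_sub_cancel ENNReal.one_ne_top prob_le_one]
      rw [hBk]
      calc (1 : ℝ≥0∞) / 2 = 1 - 1/2 := by
            simpa using (ENNReal.sub_half (a := 1) ENNReal.one_ne_top).symm
        _ ≤ 1 - Pr ((B k)ᶜ) := tsub_le_tsub_left hhalf 1
  -- key step
  have h21 : (1 / 2 : ℝ≥0∞) * 2 = 1 := by
    rw [one_div, ENNReal.inv_mul_cancel] <;> norm_num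
  have hPrA : ∀ k ∈ Finset.Icc 1 m, Pr (A k) ≤ 2 * Pr (A k ∩ C) := by
    intro k hk
    have hmul : Pr (A k ∩ B k) = Pr (A k) * Pr (B k) :=
      ((hIndep k).indepSet_of_measurableSet (hA_MS k hk) (hB_MT k)).measure_inter_eq_mul
    calc Pr (A k) = Pr (A k) * (1 / 2 * 2) := by rw [h21, mul_one]
      _ = Pr (A k) * (1 / 2) * 2 := by ring
      _ ≤ Pr (A k) * Pr (B k) * 2 :=
          mul_le_mul_left (mul_le_mul_right (hPrB k hk) _) 2
      _ = 2 * Pr (A k ∩ B k) := by rw [hmul]; ring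
      _ ≤ 2 * Pr (A k ∩ C) := by
          refine mul_le_mul_right (measure_mono ?_) 2
          exact Set.subset_inter Set.inter_subset_left (hABC k hk)
  -- tail bound for C
  have hCtail : Pr C ≤ ENNReal.ofReal (2 * E) := by
    have : C = {θ | l < |∑ i ∈ Finset.Icc 1 m, u i θ|} := by
      ext θ; simp [hC, hS m θ]
    rw [this]
    exact tail_bound Pr m hm u hmeas hInd hmean L hL a hbound
      (Finset.Icc 1 m) le_rfl (Finset.nonempty_Icc.mpr hm) l hl
  -- assemble
  rw [hTeq, measure_biUnion_finset hdisj (fun k hk => hA_meas k (Finset.mem_coe.mp hk))]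
  have hdisj2 : (↑(Finset.Icc 1 m) : Set ℕ).PairwiseDisjoint (fun k => A k ∩ C) := by
    intro p hp q hq hne
    exact ((hdisj hp hq hne).mono Set.inter_subset_left Set.inter_subset_left)
  have hCmeas : MeasurableSet C := by
    have hSm : Measurable (S m) := by
      have : S m = fun θ => ∑ n ∈ Finset.Icc 1 m, u n θ := funext (hS m)
      rw [this]
      exact Finset.measurable_sum _ (fun n _ => hmeas n)
    exact measurableSet_lt measurable_const hSm.abs
  calc ∑ k ∈ Finset.Icc 1 m, Pr (A k)
      ≤ ∑ k ∈ Finset.Icc 1 m, 2 * Pr (A k ∩ C) := Finset.sum_le_sum hPrA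
    _ = 2 * ∑ k ∈ Finset.Icc 1 m, Pr (A k ∩ C) := by rw [Finset.mul_sum]
    _ = 2 * Pr (⋃ k ∈ Finset.Icc 1 m, (A k ∩ C)) := by
        rw [measure_biUnion_finset hdisj2
          (fun k hk => (hA_meas k (Finset.mem_coe.mp hk)).inter hCmeas)]
    _ ≤ 2 * Pr C := by
        refine mul_le_mul_right (measure_mono ?_) 2
        exact Set.iUnion₂_subset (fun k hk => Set.inter_subset_right)
    _ ≤ 2 * ENNReal.ofReal (2 * E) := mul_le_mul_right hCtail 2
    _ = ENNReal.ofReal (4 * E) := by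
        rw [show ((2:ℝ≥0∞)) = ENNReal.ofReal (2:ℝ) by simp,
          ← ENNReal.ofReal_mul (by norm_num)]
        congr 1
        ring
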